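/- arXiv:math/0309342 — 2 statements merged into one kernel-verified Lean document; each statement's English description precedes it below -/
import Mathlib

section
/- For matrices M1, M2, M3 in SL(2,C), setting a_i = Tr(M_i) for i=1,2,3, a_4 = Tr(M1 M2 M3), x_1 = Tr(M2 M3), x_2 = Tr(M3 M1), x_3 = Tr(M1 M2), the relation x_1 x_2 x_3 + x_1^2 + x_2^2 + x_3^2 - θ_1 x_1 - θ_2 x_2 - θ_3 x_3 + θ_4 = 0 holds, where θ_i = a_i a_4 + a_j a_k for (i,j,k) a cyclic permutation of (1,2,3) and θ_4 = a_1 a_2 a_3 a_4 + a_1^2 + a_2^2 + a_3^2 + a_4^2 - 4. -/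
/-- The fundamental cubic trace relation for triples of matrices in SL(2,ℂ). -/
theorem sl2_trace_cubic_relation (M1 M2 M3 : Matrix (Fin 2) (Fin 2) ℂ)
    (h1 : M1.det = 1) (h2 : M2.det = 1) (h3 : M3.det = 1) :
    let a1 := M1.trace
    let a2 := M2.trace
    let a3 := M3.trace
    let a4 := (M1 * M2 * M3).trace
    let x1 := (M2 * M3).trace
    let x2 := (M3 * M1).trace
    let x3 := (M1 * M2).trace
    x1 * x2 * x3 + x1 ^ 2 + x2 ^ 2 + x3 ^ 2
      - (a1 * a4 + a2 * a3) * x1 - (a2 * a4 + a3 * a1) * x2 - (a3 * a4 + a1 * a2) * x3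
      + (a1 * a2 * a3 * a4 + a1 ^ 2 + a2 ^ 2 + a3 ^ 2 + a4 ^ 2 - 4) = 0 := by
  rw [Matrix.det_fin_two] at h1 h2 h3
  simp only [Matrix.trace_fin_two, Matrix.mul_apply, Fin.sum_univ_two]
  linear_combination
      (2 - (M3 1 1)*(M3 1 1) - (M3 0 0)*(M3 0 0) - (M2 1 1)*(M2 1 1) + (M2 1 1)*(M2 1 1)*(M3 0 0)*(M3 1 1) - (M2 1 0)*(M2 1 1)*(M3 0 1)*(M3 1 1) + (M2 1 0)*(M2 1 1)*(M3 0 0)*(M3 0 1) - (M2 1 0)*(M2 1 0)*(M3 0 1)*(M3 0 1) - (M2 0 1)*(M2 1 1)*(M3 1 0)*(M3 1 1) + (M2 0 1)*(M2 1 1)*(M3 0 0)*(M3 1 0) - (M2 0 1)*(M2 0 1)*(M3 1 0)*(M3 1 0) + (M2 0 0)*(M2 1 1)*(M3 1 1)*(M3 1 1) - 2*(M2 0 0)*(M2 1 1)*(M3 0 0)*(M3 1 1) + (M2 0 0)*(M2 1 1)*(M3 0 0)*(M3 0 0) + (M2 0 0)*(M2 1 0)*(M3 0 1)*(M3 1 1)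 - (M2 0 0)*(M2 1 0)*(M3 0 0)*(M3 0 1) + (M2 0 0)*(M2 0 1)*(M3 1 0)*(M3 1 1) - (M2 0 0)*(M2 0 1)*(M3 0 0)*(M3 1 0) - (M2 0 0)*(M2 0 0) + (M2 0 0)*(M2 0 0)*(M3 0 0)*(M3 1 1)) * h1 +
      (2 - 2*(M3 0 0)*(M3 1 1) - (M1 1 1)*(M1 1 1) + (M1 1 1)*(M1 1 1)*(M3 0 0)*(M3 1 1) - (M1 1 0)*(M1 1 1)*(M3 0 1)*(M3 1 1) + (M1 1 0)*(M1 1 1)*(M3 0 0)*(M3 0 1) - (M1 1 0)*(M1 1 0)*(M3 0 1)*(M3 0 1) - (M1 0 1)*(M1 1 1)*(M3 1 0)*(M3 1 1) + (M1 0 1)*(M1 1 1)*(M3 0 0)*(M3 1 0) + (M1 0 1)*(M1 1 0)*(M3 1 1)*(M3 1 1) - 2*(M1 0 1)*(M1 1 0)*(M3 0 0)*(M3 1 1) + (M1 0 1)*(M1 1 0)*(M3 0 0)*(M3 0 0) - (M1 0 1)*(M1 0 1)*(M3 1 0)*(M3 1 0) + (M1 0 0)*(M1 1 0)*(M3 0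 1)*(M3 1 1) - (M1 0 0)*(M1 1 0)*(M3 0 0)*(M3 0 1) + (M1 0 0)*(M1 0 1)*(M3 1 0)*(M3 1 1) - (M1 0 0)*(M1 0 1)*(M3 0 0)*(M3 1 0) - (M1 0 0)*(M1 0 0) + (M1 0 0)*(M1 0 0)*(M3 0 0)*(M3 1 1)) * h2 +
      (-2*(M2 0 1)*(M2 1 0) + (M1 1 1)*(M1 1 1)*(M2 0 1)*(M2 1 0) - (M1 1 0)*(M1 1 1)*(M2 0 1)*(M2 1 1) + (M1 1 0)*(M1 1 1)*(M2 0 0)*(M2 0 1) - (M1 1 0)*(M1 1 0)*(M2 0 1)*(M2 0 1) - (M1 0 1)*(M1 1 1)*(M2 1 0)*(M2 1 1) + (M1 0 1)*(M1 1 1)*(M2 0 0)*(M2 1 0) - 2*(M1 0 1)*(M1 1 0) + (M1 0 1)*(M1 1 0)*(M2 1 1)*(M2 1 1) - 2*(M1 0 1)*(M1 1 0)*(M2 0 1)*(M2 1 0) + (M1 0 1)*(M1 1 0)*(M2 0 0)*(M2 0 0) - (M1 0 1)*(M1 0 1)*(M2 1 0)*(M2 1 0) + (M1 0 0)*(M1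 1 0)*(M2 0 1)*(M2 1 1) - (M1 0 0)*(M1 1 0)*(M2 0 0)*(M2 0 1) + (M1 0 0)*(M1 0 1)*(M2 1 0)*(M2 1 1) - (M1 0 0)*(M1 0 1)*(M2 0 0)*(M2 1 0) + (M1 0 0)*(M1 0 0)*(M2 0 1)*(M2 1 0)) * h3
end

section
/- Let f : X → Y be a continuous surjective map of locally compact Hausdorff topological spaces, S ⊂ Y a closed subset, Y♯ = Y \ S, X♯ = f^{-1}(Y♯). Assume X♯ is dense in X, the restriction f : X♯ → Y♯ is a homeomorphism, every fiber f^{-1}(y) is compact, and every point y ∈ Y admits open neighborhoods U ⊇ f^{-1}(y) in X and V ∋ y in Y with f(U) ⊂ V such that f|_U : U → V is proper and Y♯ ∩ V is connected. Then f(X♯ ∩ U) = Y♯ ∩ V and f^{-1}(V) = U; in particular f is proper. -/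
/-- Topological version of Fujiki's lemma. Let `f : X → Y` be a continuous surjection of
locally compact Hausdorff spaces, `S ⊆ Y` closed, `Y♯ = Y \ S`, `X♯ = f⁻¹(Y♯)`. Assume
`X♯` is dense in `X`, `f` restricts to a homeomorphism `X♯ → Y♯` (witnessed by a
continuous inverse `g`), all fibers of `f` are compact, and every `y ∈ Y` admits open
neighborhoods `U ⊇ f⁻¹(y)` and `V ∋ y` with `f(U) ⊆ V`, `f|_U : U → V` proper and
`Y♯ ∩ V` connected. Then for any such `y, U, V` we have `f(X♯ ∩ U) = Y♯ ∩ V` and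
`f⁻¹(V) = U`; in particular `f` is a proper map. -/
theorem fujiki_properness_lemma {X Y : Type*} [TopologicalSpace X] [TopologicalSpace Y]
    [LocallyCompactSpace X] [T2Space X] [LocallyCompactSpace Y] [T2Space Y]
    (f : X → Y) (hc : Continuous f) (hsurj : Function.Surjective f)
    (S : Set Y) (hS : IsClosed S)
    (Ys : Set Y) (hYs : Ys = Sᶜ)
    (Xs : Set X) (hXs : Xs = f ⁻¹' Ys)
    (hdense : Dense Xs)
    (g : Y → X) (hg1 : Set.MapsTo g Ys Xs) (hg2 : ContinuousOn g Ys)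
    (hg3 : ∀ x ∈ Xs, g (f x) = x) (hg4 : ∀ y ∈ Ys, f (g y) = y)
    (hfib : ∀ y : Y, IsCompact (f ⁻¹' {y}))
    (hnbhd : ∀ y : Y, ∃ (U : Set X) (V : Set Y), IsOpen U ∧ IsOpen V ∧
      f ⁻¹' {y} ⊆ U ∧ y ∈ V ∧ f '' U ⊆ V ∧
      (∀ K ⊆ V, IsCompact K → IsCompact (U ∩ f ⁻¹' K)) ∧ IsConnected (Ys ∩ V)) :
    (∀ (y : Y) (U : Set X) (V : Set Y), IsOpen U → IsOpen V →
      f ⁻¹' {y} ⊆ U → y ∈ V → f '' U ⊆ V →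
      (∀ K ⊆ V, IsCompact K → IsCompact (U ∩ f ⁻¹' K)) → IsConnected (Ys ∩ V) →
      f '' (Xs ∩ U) = Ys ∩ V ∧ f ⁻¹' V = U) ∧
    IsProperMap f := by
  subst hXs
  subst hYs
  have hYsOpen : IsOpen (Sᶜ : Set Y) := hS.isOpen_compl
  have key : ∀ (y : Y) (U : Set X) (V : Set Y), IsOpen U → IsOpen V →
      f ⁻¹' {y} ⊆ U → y ∈ V → f '' U ⊆ V →
      (∀ K ⊆ V, IsCompact K → IsCompact (U ∩ f ⁻¹' K)) → IsConnected (Sᶜ ∩ V) →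
      f '' (f ⁻¹' Sᶜ ∩ U) = Sᶜ ∩ V ∧ f ⁻¹' V = U := by
    intro y U V hU hV hfsub hyV hfUV hprop hconn
    set W : Set Y := f '' (f ⁻¹' Sᶜ ∩ U) with hWdef
    have hWsub : W ⊆ Sᶜ ∩ V := by
      rintro _ ⟨x, ⟨hx1, hx2⟩, rfl⟩
      exact ⟨hx1, hfUV ⟨x, hx2, rfl⟩⟩
    -- `W` is open in `Y`, since on `Sᶜ` it equals `g ⁻¹' U`
    have hWeq : W = Sᶜ ∩ g ⁻¹' U := by
      ext w
      constructor
      · rintro ⟨x, ⟨hx1, hx2⟩, rfl⟩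
        refine ⟨hx1, ?_⟩
        simpa [hg3 x hx1] using hx2
      · rintro ⟨hw1, hw2⟩
        refine ⟨g w, ⟨?_, hw2⟩, hg4 w hw1⟩
        show f (g w) ∈ Sᶜ
        rw [hg4 w hw1]; exact hw1
    have hWopen : IsOpen W := by
      rw [hWeq]
      exact hg2.isOpen_inter_preimage hYsOpen hU
    -- `W` is nonempty
    have hWne : W.Nonempty := by
      obtain ⟨x0, hx0⟩ := hsurj y
      have hUne : U.Nonempty := ⟨x0, hfsub (by simp [hx0])⟩
      obtain ⟨z, hz1, hz2⟩ := hdense.exists_mem_open hU hUne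
      exact ⟨f z, ⟨z, ⟨hz1, hz2⟩, rfl⟩⟩
    -- `W` is relatively closed in `Sᶜ ∩ V`
    have hclos : ∀ w ∈ Sᶜ ∩ V, w ∈ closure W → w ∈ W := by
      intro w hw hwc
      obtain ⟨K, hKcomp, hwint, hKV⟩ := exists_compact_subset hV hw.2
      have hCcomp : IsCompact (U ∩ f ⁻¹' K) := hprop K hKV hKcomp
      have hfC : IsClosed (f '' (U ∩ f ⁻¹' K)) := (hCcomp.image hc).isClosed
      have hsub2 : W ∩ interior K ⊆ f '' (U ∩ f ⁻¹' K) := by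
        rintro _ ⟨⟨x, ⟨_, hx2⟩, rfl⟩, hk⟩
        exact ⟨x, ⟨hx2, Set.mem_preimage.mpr (interior_subset hk)⟩, rfl⟩
      have hwc2 : w ∈ closure (W ∩ interior K) := by
        rw [mem_closure_iff] at hwc ⊢
        intro O hO hwO
        obtain ⟨z, hz⟩ := hwc (O ∩ interior K) (hO.inter isOpen_interior) ⟨hwO, hwint⟩
        exact ⟨z, ⟨hz.1.1, hz.2, hz.1.2⟩⟩
      have hwmem : w ∈ f '' (U ∩ f ⁻¹' K) :=
        hfC.closure_subset (closure_mono hsub2 hwc2)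
      obtain ⟨x, ⟨hxU, _⟩, rfl⟩ := hwmem
      exact ⟨x, ⟨hw.1, hxU⟩, rfl⟩
    -- by connectedness, `W = Sᶜ ∩ V`
    have hWV : W = Sᶜ ∩ V := by
      refine hWsub.antisymm ?_
      have hsplit : Sᶜ ∩ V ⊆ W ∪ ((Sᶜ ∩ V) ∩ (closure W)ᶜ) := by
        intro w hw
        by_cases h : w ∈ closure W
        · exact Or.inl (hclos w hw h)
        · exact Or.inr ⟨hw, h⟩
      refine IsPreconnected.subset_left_of_subset_union hWopen
        ((hYsOpen.inter hV).inter isClosed_closure.isOpen_compl) ?_ hsplit ?_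
        hconn.isPreconnected
      · rw [Set.disjoint_left]
        rintro a ha ⟨_, ha2⟩
        exact ha2 (subset_closure ha)
      · obtain ⟨w, hw⟩ := hWne
        exact ⟨w, hWsub hw, hw⟩
    refine ⟨hWV, Set.Subset.antisymm ?_ fun x hx => hfUV ⟨x, hx, rfl⟩⟩
    -- `f ⁻¹' V ⊆ U`
    intro x hx
    obtain ⟨K, hKcomp, hxint, hKV⟩ := exists_compact_subset hV hx
    have hCcomp : IsCompact (U ∩ f ⁻¹' K) := hprop K hKV hKcomp
    have hCclosed : IsClosed (U ∩ f ⁻¹' K) := hCcomp.isClosed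
    have hxc : x ∈ closure (U ∩ f ⁻¹' K) := by
      rw [mem_closure_iff]
      intro O hO hxO
      have hO' : IsOpen (O ∩ f ⁻¹' interior K) := hO.inter (isOpen_interior.preimage hc)
      obtain ⟨z, hzX, hzO, hzK⟩ := hdense.exists_mem_open hO' ⟨x, hxO, hxint⟩
      have hfz : f z ∈ Sᶜ ∩ V := ⟨hzX, hKV (interior_subset hzK)⟩
      rw [← hWV] at hfz
      obtain ⟨x', ⟨hx'1, hx'2⟩, hx'eq⟩ := hfz
      have hx'z : x' = z := by rw [← hg3 x' hx'1, hx'eq, hg3 z hzX]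
      exact ⟨z, hzO, hx'z ▸ hx'2, Set.mem_preimage.mpr (interior_subset hzK)⟩
    have := hCclosed.closure_subset hxc
    exact this.1
  refine ⟨fun y U V hU hV h1 h2 h3 h4 h5 => key y U V hU hV h1 h2 h3 h4 h5, ?_⟩
  rw [isProperMap_iff_isCompact_preimage]
  refine ⟨hc, fun K hK => ?_⟩
  choose U V hUopen hVopen hfibsub hmemV hfUV hprop hconn using hnbhd
  have hUeq : ∀ y, f ⁻¹' (V y) = U y := fun y =>
    (key y (U y) (V y) (hUopen y) (hVopen y) (hfibsub y) (hmemV y) (hfUV y) (hprop y)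
      (hconn y)).2
  have hKnbhd : ∀ y : Y, ∃ K', IsCompact K' ∧ y ∈ interior K' ∧ K' ⊆ V y := fun y =>
    exists_compact_subset (hVopen y) (hmemV y)
  choose K' hK'comp hK'int hK'sub using hKnbhd
  obtain ⟨t, htsub, htfin, htcover⟩ := hK.elim_finite_subcover_image
    (fun y _ => isOpen_interior) (fun x hx => Set.mem_biUnion hx (hK'int x))
  have hbig : IsCompact (⋃ y ∈ t, U y ∩ f ⁻¹' K' y) :=
    htfin.isCompact_biUnion fun y _ => hprop y (K' y) (hK'sub y) (hK'comp y)
  refine hbig.of_isClosed_subset (hK.isClosed.preimage hc) ?_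
  intro x hx
  obtain ⟨y, hyt, hxy⟩ := Set.mem_iUnion₂.mp (htcover hx)
  refine Set.mem_biUnion hyt ⟨?_, Set.mem_preimage.mpr (interior_subset hxy)⟩
  rw [← hUeq y]
  exact hK'sub y (interior_subset hxy)
end
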